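/- Let σ > 0, c ∈ ℝ, T > 0, and for 0 ≤ t < T and x > 0 define w(x,t) = N(d₊(x,t)) − x^{1 − 2c/σ²}·N(d₋(x,t)), where d₊(x,t) = (ln x + (c − σ²/2)(T−t))/(σ√(T−t)) and d₋(x,t) = (ln(1/x) + (c − σ²/2)(T−t))/(σ√(T−t)). Then w satisfies the PDE ∂w/∂t + ½σ²x²·∂²w/∂x² + c·x·∂w/∂x = 0 for all x > 0 and 0 < t < T. -/

import Mathlib

open Real Set Filter Topology MeasureTheory

noncomputable def stdNormalCDF (x : ℝ) : ℝ :=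
  (Real.sqrt (2 * Real.pi))⁻¹ * ∫ t in Set.Iic x, Real.exp (-t ^ 2 / 2)

lemma gauss_integrable : Integrable (fun t : ℝ => Real.exp (-t ^ 2 / 2)) := by
  have h := integrable_exp_neg_mul_sq (by norm_num : (0:ℝ) < 1/2)
  have he : (fun t : ℝ => Real.exp (-t ^ 2 / 2)) = fun t : ℝ => Real.exp (-(1/2) * t ^ 2) := by
    funext t; ring_nf
  rw [he]; exact h

lemma hasDerivAt_cdf (x : ℝ) :
    HasDerivAt stdNormalCDF ((Real.sqrt (2 * Real.pi))⁻¹ * Real.exp (-x ^ 2 / 2)) x := by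
  have hi := gauss_integrable
  have hcont : Continuous fun t : ℝ => Real.exp (-t ^ 2 / 2) := by continuity
  have heq : stdNormalCDF = fun y => (Real.sqrt (2 * Real.pi))⁻¹ *
      ((∫ t in Set.Iic (0:ℝ), Real.exp (-t ^ 2 / 2)) + ∫ t in (0:ℝ)..y, Real.exp (-t ^ 2 / 2)) := by
    funext y
    unfold stdNormalCDF
    rw [← intervalIntegral.integral_Iic_sub_Iic hi.integrableOn hi.integrableOn]
    ring
  have hd : HasDerivAt (fun y => ∫ t in (0:ℝ)..y, Real.exp (-t ^ 2 / 2)) (Real.exp (-x ^ 2 / 2)) x :=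
    intervalIntegral.integral_hasDerivAt_right hi.intervalIntegrable
      (hcont.stronglyMeasurableAtFilter _ _) hcont.continuousAt
  rw [heq]
  exact (hd.const_add _).const_mul _

lemma hasDerivAt_phi (y : ℝ) :
    HasDerivAt (fun u : ℝ => (Real.sqrt (2 * Real.pi))⁻¹ * Real.exp (-u ^ 2 / 2))
      ((Real.sqrt (2 * Real.pi))⁻¹ * Real.exp (-y ^ 2 / 2) * (-y)) y := by
  have h := (((hasDerivAt_pow 2 y).neg.div_const 2).exp).const_mul ((Real.sqrt (2 * Real.pi))⁻¹)
  simp only [Pi.neg_apply] at h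
  refine h.congr_deriv ?_
  norm_num; ring

set_option maxHeartbeats 2000000 in
theorem w_satisfies_pde (σ c T : ℝ) (hσ : 0 < σ) (hT : 0 < T)
    (w : ℝ → ℝ → ℝ)
    (hw : ∀ x > 0, ∀ t < T,
      w x t = stdNormalCDF ((Real.log x + (c - σ ^ 2 / 2) * (T - t)) / (σ * Real.sqrt (T - t))) -
        x ^ (1 - 2 * c / σ ^ 2) *
          stdNormalCDF ((Real.log (1 / x) + (c - σ ^ 2 / 2) * (T - t)) / (σ * Real.sqrt (T - t)))) :
    ∀ x > 0, ∀ t ∈ Set.Ioo 0 T,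
      deriv (fun s => w x s) t +
        (1 / 2) * σ ^ 2 * x ^ 2 * deriv (deriv (fun y => w y t)) x +
        c * x * deriv (fun y => w y t) x = 0 := by
  intro x hx t ht
  have htT : t < T := ht.2
  have hτ : (0:ℝ) < T - t := sub_pos.mpr htT
  have hst : Real.sqrt (T - t) ≠ 0 := ne_of_gt (Real.sqrt_pos.mpr hτ)
  have hS : σ * Real.sqrt (T - t) ≠ 0 := mul_ne_zero hσ.ne' hst
  have hrr : Real.sqrt (T - t) ^ 2 = T - t := Real.sq_sqrt hτ.le
  -- Part 1: time derivative
  have hwF : (fun s => w x s) =ᶠ[𝓝 t] (fun u =>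
      stdNormalCDF ((Real.log x + (c - σ ^ 2 / 2) * (T - u)) / (σ * Real.sqrt (T - u))) -
        x ^ (1 - 2 * c / σ ^ 2) *
          stdNormalCDF ((-Real.log x + (c - σ ^ 2 / 2) * (T - u)) / (σ * Real.sqrt (T - u)))) := by
    filter_upwards [Iio_mem_nhds htT] with u hu
    rw [hw x hx u hu, one_div, Real.log_inv]
  have hT' : HasDerivAt (fun u : ℝ => T - u) (-1 : ℝ) t := by
    simpa using (hasDerivAt_id t).const_sub T
  have hden : HasDerivAt (fun u : ℝ => σ * Real.sqrt (T - u))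
      (σ * (1 / (2 * Real.sqrt (T - t)) * (-1))) t :=
    ((Real.hasDerivAt_sqrt hτ.ne').comp t hT').const_mul σ
  have hdpt := ((hT'.const_mul (c - σ ^ 2 / 2)).const_add (Real.log x)).div hden hS
  have hdmt := ((hT'.const_mul (c - σ ^ 2 / 2)).const_add (-Real.log x)).div hden hS
  have hdF := ((hasDerivAt_cdf
      ((Real.log x + (c - σ ^ 2 / 2) * (T - t)) / (σ * Real.sqrt (T - t)))).comp t hdpt).sub
    (((hasDerivAt_cdf
      ((-Real.log x + (c - σ ^ 2 / 2) * (T - t)) / (σ * Real.sqrt (T - t)))).comp t hdmt).const_mul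
      (x ^ (1 - 2 * c / σ ^ 2)))
  have hderiv_t := hwF.deriv_eq.trans hdF.deriv
  -- Part 2: first space derivative
  have hF2 : ∀ y : ℝ, 0 < y → HasDerivAt (fun z =>
      stdNormalCDF ((Real.log z + (c - σ ^ 2 / 2) * (T - t)) / (σ * Real.sqrt (T - t))) -
        z ^ (1 - 2 * c / σ ^ 2) *
          stdNormalCDF ((-Real.log z + (c - σ ^ 2 / 2) * (T - t)) / (σ * Real.sqrt (T - t))))
      ((Real.sqrt (2 * Real.pi))⁻¹ *
          Real.exp (-((Real.log y + (c - σ ^ 2 / 2) * (T - t)) / (σ * Real.sqrt (T - t))) ^ 2 / 2) *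
          (y⁻¹ / (σ * Real.sqrt (T - t))) -
        ((1 - 2 * c / σ ^ 2) * y ^ (1 - 2 * c / σ ^ 2 - 1) *
            stdNormalCDF ((-Real.log y + (c - σ ^ 2 / 2) * (T - t)) / (σ * Real.sqrt (T - t))) +
          y ^ (1 - 2 * c / σ ^ 2) *
            ((Real.sqrt (2 * Real.pi))⁻¹ *
              Real.exp (-((-Real.log y + (c - σ ^ 2 / 2) * (T - t)) /
                (σ * Real.sqrt (T - t))) ^ 2 / 2) *
              (-y⁻¹ / (σ * Real.sqrt (T - t)))))) y := by
    intro y hy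
    exact ((hasDerivAt_cdf
        ((Real.log y + (c - σ ^ 2 / 2) * (T - t)) / (σ * Real.sqrt (T - t)))).comp y
        (((Real.hasDerivAt_log hy.ne').add_const
          ((c - σ ^ 2 / 2) * (T - t))).div_const (σ * Real.sqrt (T - t)))).sub
      ((Real.hasDerivAt_rpow_const (Or.inl hy.ne')).mul ((hasDerivAt_cdf
        ((-Real.log y + (c - σ ^ 2 / 2) * (T - t)) / (σ * Real.sqrt (T - t)))).comp y
        ((((Real.hasDerivAt_log hy.ne').neg).add_const
          ((c - σ ^ 2 / 2) * (T - t))).div_const (σ * Real.sqrt (T - t)))))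
  have hGev : deriv (fun y => w y t) =ᶠ[𝓝 x] (fun y =>
      (Real.sqrt (2 * Real.pi))⁻¹ *
          Real.exp (-((Real.log y + (c - σ ^ 2 / 2) * (T - t)) / (σ * Real.sqrt (T - t))) ^ 2 / 2) *
          (y⁻¹ / (σ * Real.sqrt (T - t))) -
        ((1 - 2 * c / σ ^ 2) * y ^ (1 - 2 * c / σ ^ 2 - 1) *
            stdNormalCDF ((-Real.log y + (c - σ ^ 2 / 2) * (T - t)) / (σ * Real.sqrt (T - t))) +
          y ^ (1 - 2 * c / σ ^ 2) *
            ((Real.sqrt (2 * Real.pi))⁻¹ *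
              Real.exp (-((-Real.log y + (c - σ ^ 2 / 2) * (T - t)) /
                (σ * Real.sqrt (T - t))) ^ 2 / 2) *
              (-y⁻¹ / (σ * Real.sqrt (T - t)))))) := by
    filter_upwards [isOpen_Ioi.eventually_mem (Set.mem_Ioi.mpr hx)] with y hy
    have h1 : (fun z => w z t) =ᶠ[𝓝 y] (fun z =>
        stdNormalCDF ((Real.log z + (c - σ ^ 2 / 2) * (T - t)) / (σ * Real.sqrt (T - t))) -
          z ^ (1 - 2 * c / σ ^ 2) *
            stdNormalCDF ((-Real.log z + (c - σ ^ 2 / 2) * (T - t)) / (σ * Real.sqrt (T - t)))) := by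
      filter_upwards [isOpen_Ioi.eventually_mem hy] with z hz
      rw [hw z hz t htT, one_div, Real.log_inv]
    rw [h1.deriv_eq, (hF2 y hy).deriv]
  have hderiv_x1 := hGev.eq_of_nhds
  -- second space derivative
  have hdpx := ((Real.hasDerivAt_log hx.ne').add_const
      ((c - σ ^ 2 / 2) * (T - t))).div_const (σ * Real.sqrt (T - t))
  have hdmx := (((Real.hasDerivAt_log hx.ne').neg).add_const
      ((c - σ ^ 2 / 2) * (T - t))).div_const (σ * Real.sqrt (T - t))
  have hG' := (((hasDerivAt_phi
        ((Real.log x + (c - σ ^ 2 / 2) * (T - t)) / (σ * Real.sqrt (T - t)))).comp x hdpx).mul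
      ((hasDerivAt_inv hx.ne').div_const (σ * Real.sqrt (T - t)))).sub
    ((((Real.hasDerivAt_rpow_const (p := 1 - 2 * c / σ ^ 2 - 1)
          (Or.inl hx.ne')).const_mul (1 - 2 * c / σ ^ 2)).mul
        ((hasDerivAt_cdf
          ((-Real.log x + (c - σ ^ 2 / 2) * (T - t)) / (σ * Real.sqrt (T - t)))).comp x hdmx)).add
      ((Real.hasDerivAt_rpow_const (p := 1 - 2 * c / σ ^ 2) (Or.inl hx.ne')).mul
        (((hasDerivAt_phi
            ((-Real.log x + (c - σ ^ 2 / 2) * (T - t)) / (σ * Real.sqrt (T - t)))).comp x hdmx).mul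
          (((hasDerivAt_inv hx.ne').neg).div_const (σ * Real.sqrt (T - t))))))
  have hderiv_x2 := hGev.deriv_eq.trans hG'.deriv
  rw [hderiv_t, hderiv_x2, hderiv_x1]
  simp only [Function.comp_apply, Pi.mul_apply, Pi.neg_apply, Pi.add_apply, Pi.sub_apply, Pi.div_apply]
  generalize hu : Real.sqrt (T - t) = u
  have hu0 : u ≠ 0 := hu ▸ hst
  have huu : u ^ 2 = T - t := hu ▸ hrr
  rw [← huu]
  have hkey : Real.exp (-((-Real.log x + (c - σ ^ 2 / 2) * u ^ 2) / (σ * u)) ^ 2 / 2)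
      = Real.exp (-((Real.log x + (c - σ ^ 2 / 2) * u ^ 2) / (σ * u)) ^ 2 / 2) *
        (x ^ (1 - 2 * c / σ ^ 2))⁻¹ := by
    rw [Real.rpow_def_of_pos hx, ← Real.exp_neg, ← Real.exp_add]
    congr 1
    field_simp
    ring
  rw [hkey]
  rw [Real.rpow_sub hx (1 - 2 * c / σ ^ 2 - 1) 1, Real.rpow_sub hx (1 - 2 * c / σ ^ 2) 1,
    Real.rpow_one]
  have hA : x ^ ((1:ℝ) - 2 * c / σ ^ 2) ≠ 0 := (Real.rpow_pos_of_pos hx _).ne'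
  field_simp
  ring
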